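/- arXiv:2503.08185 — 2 statements merged into one kernel-verified Lean document; each statement's English description precedes it below -/
import Mathlib

section
/- Let Ω ⊆ Ω* be finite sets, π the uniform measure on Ω and μ the uniform measure on Ω*. Let f: Ω → ℝ and define g: Ω* → ℝ by g(x) = f(x) for x ∈ Ω and g(x) = E_π[f] otherwise. Then Ent_π(f²) ≤ (|Ω*|/|Ω|) · Ent_μ(g²). -/
open Classical

/-- Extension lemma for entropies: if `π` is uniform on a nonempty subset `s` of a
finite set `α` and `μ` is uniform on `α`, and `g` extends `f` by the `π`-mean of `f`
outside `s`, then `Ent_π(f²) ≤ (|α|/|s|) · Ent_μ(g²)`. -/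
theorem entropy_extension (α : Type*) [Fintype α] (s : Finset α) (hs : s.Nonempty)
    (f : α → ℝ) :
    let m : ℝ := s.card
    let N : ℝ := Fintype.card α
    let Ef : ℝ := (∑ x ∈ s, f x) / m
    let g : α → ℝ := fun x => if x ∈ s then f x else Ef
    let Entπ : ℝ := (∑ x ∈ s, f x ^ 2 * Real.log (f x ^ 2)) / m -
      ((∑ x ∈ s, f x ^ 2) / m) * Real.log ((∑ x ∈ s, f x ^ 2) / m)
    let Entμ : ℝ := (∑ x, g x ^ 2 * Real.log (g x ^ 2)) / N -
      ((∑ x, g x ^ 2) / N) * Real.log ((∑ x, g x ^ 2) / N)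
    Entπ ≤ (N / m) * Entμ := by
  intro m N Ef g Entπ Entμ
  have hm : (0:ℝ) < m := by
    simp only [m]
    exact_mod_cast Finset.card_pos.mpr hs
  have hmN : m ≤ N := by
    simp only [m, N]
    exact_mod_cast Finset.card_le_univ s
  have hN : (0:ℝ) < N := lt_of_lt_of_le hm hmN
  set k : ℝ := N - m with hk
  have hk0 : 0 ≤ k := by simp only [hk]; linarith
  set A : ℝ := ∑ x ∈ s, f x ^ 2 with hA
  set B : ℝ := ∑ x ∈ s, f x ^ 2 * Real.log (f x ^ 2) with hB
  have hA0 : 0 ≤ A := Finset.sum_nonneg fun x _ => sq_nonneg _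
  set c : ℝ := Ef ^ 2 with hc
  have hc0 : 0 ≤ c := sq_nonneg _
  have hcard : ((sᶜ.card : ℕ) : ℝ) = k := by
    rw [Finset.card_compl, Nat.cast_sub (Finset.card_le_univ s)]
  -- compute the sums over all of α
  have h1 : ∑ x, g x ^ 2 = A + k * c := by
    rw [← Finset.sum_add_sum_compl s]
    have e1 : ∑ x ∈ s, g x ^ 2 = A := Finset.sum_congr rfl fun x hx => by simp [g, hx]
    have e2 : ∑ x ∈ sᶜ, g x ^ 2 = k * c := by
      rw [Finset.sum_congr rfl (fun x hx => show g x ^ 2 = c by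
          have hgx : g x = Ef := if_neg (Finset.mem_compl.mp hx)
          rw [hgx]),
        Finset.sum_const, nsmul_eq_mul, hcard]
    rw [e1, e2]
  have h2 : ∑ x, g x ^ 2 * Real.log (g x ^ 2) = B + k * (c * Real.log c) := by
    rw [← Finset.sum_add_sum_compl s]
    have e1 : ∑ x ∈ s, g x ^ 2 * Real.log (g x ^ 2) = B :=
      Finset.sum_congr rfl fun x hx => by simp [g, hx]
    have e2 : ∑ x ∈ sᶜ, g x ^ 2 * Real.log (g x ^ 2) = k * (c * Real.log c) := by
      rw [Finset.sum_congr rfl (fun x hx =>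
          show g x ^ 2 * Real.log (g x ^ 2) = c * Real.log c by
          have hgx : g x = Ef := if_neg (Finset.mem_compl.mp hx)
          rw [hgx]),
        Finset.sum_const, nsmul_eq_mul, hcard]
    rw [e1, e2]
  -- convexity of t ↦ t log t
  have hcomb : (m/N) • (A/m) + (k/N) • c = (A + k*c)/N := by
    field_simp
    simp only [smul_eq_mul]
    field_simp
  have hconv := Real.convexOn_mul_log.2 (Set.mem_Ici.2 (div_nonneg hA0 hm.le))
    (Set.mem_Ici.2 hc0) (div_nonneg hm.le hN.le) (div_nonneg hk0 hN.le)
    (by field_simp; linarith)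
  rw [hcomb, smul_eq_mul, smul_eq_mul] at hconv
  have key : (A + k*c) * Real.log ((A+k*c)/N) ≤ A * Real.log (A/m) + k*(c*Real.log c) := by
    have h3 := mul_le_mul_of_nonneg_left hconv hN.le
    have e1 : N * ((A+k*c)/N * Real.log ((A+k*c)/N))
        = (A+k*c) * Real.log ((A+k*c)/N) := by field_simp
    have e2 : N * (m/N*(A/m*Real.log (A/m)) + k/N*(c*Real.log c))
        = A * Real.log (A/m) + k*(c*Real.log c) := by
      field_simp
    rw [e1, e2] at h3
    exact h3
  -- finish
  show B/m - (A/m) * Real.log (A/m) ≤ N/m *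
    ((∑ x, g x ^ 2 * Real.log (g x ^ 2)) / N -
      ((∑ x, g x ^ 2) / N) * Real.log ((∑ x, g x ^ 2) / N))
  rw [h1, h2]
  have hrhs : N/m * ((B + k*(c*Real.log c))/N - ((A + k*c)/N) * Real.log ((A+k*c)/N))
      = (B + k*(c*Real.log c) - (A + k*c) * Real.log ((A+k*c)/N)) / m := by
    field_simp
  rw [hrhs]
  have hlhs : B/m - (A/m) * Real.log (A/m) = (B - A * Real.log (A/m)) / m := by
    field_simp
  rw [hlhs]
  exact (div_le_div_iff_of_pos_right hm).mpr (by linarith)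
end

section
/- Subadditivity of entropy for product measures: if μ = μ_1 ⊗ ... ⊗ μ_n is a product probability measure on a finite product space Ω_1 × ... × Ω_n, and h is a nonnegative function on the product, then Ent_μ(h) ≤ Σ_{i=1}^n E_μ[ Ent_{μ_i}(h | coordinates other than i) ], where the inner entropy is with respect to the i-th coordinate with the others fixed. -/
/-- Entropy of a nonnegative function `h` with respect to a weight function `w`
(a probability mass function) on a finite type, with the convention `0 log 0 = 0`
(`Real.log 0 = 0`). -/
noncomputable def finEnt {α : Type*} [Fintype α] (w : α → ℝ) (h : α → ℝ) : ℝ :=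
  ∑ x, w x * h x * Real.log (h x) -
    (∑ x, w x * h x) * Real.log (∑ x, w x * h x)

open Finset Real

lemma entDual {α : Type*} [Fintype α] (w h f : α → ℝ)
    (hw : ∀ a, 0 ≤ w a) (hh : ∀ a, 0 ≤ h a) (hf : ∀ a, 0 ≤ f a)
    (hpos : ∀ a, 0 < h a → 0 < f a)
    (hs : 0 < ∑ a, w a * h a) (hF : 0 < ∑ a, w a * f a) :
    ∑ a, w a * h a * Real.log (f a) - (∑ a, w a * h a) * Real.log (∑ a, w a * f a) ≤
      ∑ a, w a * h a * Real.log (h a) - (∑ a, w a * h a) * Real.log (∑ a, w a * h a) := by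
  set s := ∑ a, w a * h a with hsdef
  set F := ∑ a, w a * f a with hFdef
  have key : ∀ a ∈ univ, w a * h a * (Real.log (f a) - Real.log (h a) + (Real.log s - Real.log F))
      ≤ (s / F) * (w a * f a) - w a * h a := by
    intro a _
    rcases eq_or_lt_of_le (hh a) with h0 | hpa
    · rw [← h0]
      have : 0 ≤ s / F * (w a * f a) :=
        mul_nonneg (div_nonneg hs.le hF.le) (mul_nonneg (hw a) (hf a))
      simpa using this
    rcases eq_or_lt_of_le (hw a) with w0 | wpa
    · rw [← w0]
      simp
    have hfa := hpos a hpa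
    have hlog : Real.log (f a) - Real.log (h a) + (Real.log s - Real.log F)
        = Real.log (f a * s / (h a * F)) := by
      rw [Real.log_div (by positivity) (by positivity), Real.log_mul (by positivity) (by positivity),
        Real.log_mul (by positivity) (by positivity)]
      ring
    rw [hlog]
    have hx : 0 < f a * s / (h a * F) := by positivity
    have hle := Real.log_le_sub_one_of_pos hx
    have h1 : w a * h a * (f a * s / (h a * F)) = s / F * (w a * f a) := by
      field_simp
    nlinarith [mul_le_mul_of_nonneg_left hle (le_of_lt (mul_pos wpa hpa))]
  have hsum := Finset.sum_le_sum key
  have e1 : ∑ a, (w a * h a * (Real.log (f a) - Real.log (h a) + (Real.log s - Real.log F)))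
      = (∑ a, w a * h a * Real.log (f a)) - (∑ a, w a * h a * Real.log (h a))
        + s * (Real.log s - Real.log F) := by
    rw [hsdef, Finset.sum_mul]
    rw [← Finset.sum_sub_distrib, ← Finset.sum_add_distrib]
    apply Finset.sum_congr rfl
    intro a _; ring
  have e2 : ∑ a, ((s / F) * (w a * f a) - w a * h a) = 0 := by
    rw [Finset.sum_sub_distrib, ← Finset.mul_sum, ← hFdef, ← hsdef]
    field_simp
    ring
  rw [e1, e2] at hsum
  nlinarith [hsum]

lemma finEnt_mix {α β : Type*} [Fintype α] [Fintype β] (w : α → ℝ) (hw : ∀ a, 0 ≤ w a)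
    (lam : β → ℝ) (hl : ∀ b, 0 ≤ lam b) (H : β → α → ℝ) (hH : ∀ b a, 0 ≤ H b a) :
    finEnt w (fun a => ∑ b, lam b * H b a) ≤ ∑ b, lam b * finEnt w (H b) := by
  set f : α → ℝ := fun a => ∑ b, lam b * H b a with hfdef
  have hf : ∀ a, 0 ≤ f a := fun a => Finset.sum_nonneg fun b _ => mul_nonneg (hl b) (hH b a)
  set F := ∑ a, w a * f a with hFdef
  set S : β → ℝ := fun b => ∑ a, w a * H b a with hSdef
  have hSn : ∀ b, 0 ≤ S b := fun b => Finset.sum_nonneg fun a _ => mul_nonneg (hw a) (hH b a)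
  have hFn : 0 ≤ F := Finset.sum_nonneg fun a _ => mul_nonneg (hw a) (hf a)
  have hFS : F = ∑ b, lam b * S b := by
    rw [hFdef, hSdef]
    simp only [hfdef, Finset.mul_sum]
    rw [Finset.sum_comm]
    apply Finset.sum_congr rfl; intro b _
    apply Finset.sum_congr rfl; intro a _; ring
  have hdecomp : finEnt w f = ∑ b, lam b *
      ((∑ a, w a * H b a * Real.log (f a)) - S b * Real.log F) := by
    unfold finEnt
    rw [← hFdef]
    have e1 : ∑ a, w a * f a * Real.log (f a)
        = ∑ b, lam b * ∑ a, w a * H b a * Real.log (f a) := by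
      simp only [hfdef, Finset.mul_sum, Finset.sum_mul]
      rw [Finset.sum_comm]
      apply Finset.sum_congr rfl; intro b _
      apply Finset.sum_congr rfl; intro a _; ring
    rw [e1, hFS]
    rw [Finset.sum_mul, ← Finset.sum_sub_distrib]
    apply Finset.sum_congr rfl; intro b _; ring
  rw [hdecomp]
  apply Finset.sum_le_sum
  intro b _
  rcases eq_or_lt_of_le (hl b) with l0 | lb
  · rw [← l0]; simp
  apply mul_le_mul_of_nonneg_left _ (hl b)
  rcases eq_or_lt_of_le (hSn b) with s0 | sb
  · -- S b = 0 : every w a * H b a = 0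
    have hz : ∀ a ∈ (univ : Finset α), w a * H b a = 0 := by
      have := (Finset.sum_eq_zero_iff_of_nonneg
        (fun a _ => mul_nonneg (hw a) (hH b a))).mp s0.symm
      exact this
    have e0 : ∑ a, w a * H b a * Real.log (f a) = 0 :=
      Finset.sum_eq_zero fun a ha => by rw [hz a ha, zero_mul]
    have e0' : ∑ a, w a * H b a * Real.log (H b a) = 0 :=
      Finset.sum_eq_zero fun a ha => by rw [hz a ha, zero_mul]
    have hSb0 : (∑ a : α, w a * H b a) = 0 := s0.symm
    unfold finEnt
    rw [e0, hSb0, e0', ← s0]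
    simp
  · -- S b > 0, so F > 0
    have hFpos : 0 < F := by
      have h1 : lam b * S b ≤ F := by
        rw [hFS]
        exact Finset.single_le_sum (fun c _ => mul_nonneg (hl c) (hSn c)) (mem_univ b)
      exact lt_of_lt_of_le (mul_pos lb sb) h1
    have hpos : ∀ a, 0 < H b a → 0 < f a := by
      intro a ha
      have h1 : lam b * H b a ≤ f a :=
        Finset.single_le_sum (fun c _ => mul_nonneg (hl c) (hH c a)) (mem_univ b)
      exact lt_of_lt_of_le (mul_pos lb ha) h1
    have := entDual w (H b) f hw (hH b) hf hpos (by rw [← hSdef] at *; exact sb) (hFdef ▸ hFpos)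
    unfold finEnt
    exact this

lemma prodRebind {n : ℕ} {Ω : Fin n → Type*} [∀ i, Fintype (Ω i)] [∀ i, DecidableEq (Ω i)]
    (μ : ∀ i, Ω i → ℝ) (i : Fin n) (hμi : ∑ y, μ i y = 1) (F : (∀ j, Ω j) → ℝ) :
    ∑ x : ∀ j, Ω j, (∏ j, μ j (x j)) * (∑ y, μ i y * F (Function.update x i y))
      = ∑ x : ∀ j, Ω j, (∏ j, μ j (x j)) * F x := by
  classical
  set e := Equiv.piSplitAt i Ω with hedef
  have hupd : ∀ (a : Ω i) (z : ∀ j : {j // j ≠ i}, Ω j) (y : Ω i),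
      Function.update (e.symm (a, z)) i y = e.symm (y, z) := by
    intro a z y
    funext j
    by_cases hj : j = i
    · subst hj
      simp [Function.update_self, hedef, Equiv.piSplitAt_symm_apply]
    · simp [Function.update_of_ne hj, hedef, Equiv.piSplitAt_symm_apply, hj]
  have hprod : ∀ (a : Ω i) (z : ∀ j : {j // j ≠ i}, Ω j),
      (∏ j, μ j ((e.symm (a, z)) j)) = μ i a * ∏ j : {j // j ≠ i}, μ j (z j) := by
    intro a z
    rw [← Finset.prod_erase_mul (univ : Finset (Fin n)) _ (mem_univ i)]
    rw [mul_comm]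
    congr 1
    · simp [hedef, Equiv.piSplitAt_symm_apply]
    · calc ∏ x ∈ univ.erase i, μ x ((e.symm (a, z)) x)
          = ∏ j : {j // j ≠ i}, μ j ((e.symm (a, z)) j) :=
            Finset.prod_subtype _ (by simp) _
        _ = ∏ j : {j // j ≠ i}, μ j (z j) :=
            Finset.prod_congr rfl (fun j _ => by
              simp [hedef, Equiv.piSplitAt_symm_apply, j.prop])
  have main : ∀ G : (∀ j, Ω j) → ℝ, ∑ x : ∀ j, Ω j, G x
      = ∑ a : Ω i, ∑ z : ∀ j : {j // j ≠ i}, Ω j, G (e.symm (a, z)) := by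
    intro G
    rw [← Equiv.sum_comp e.symm G, Fintype.sum_prod_type]
  rw [main, main (fun x => (∏ j, μ j (x j)) * F x)]
  simp only [hprod, hupd]
  rw [Finset.sum_comm]
  -- LHS : ∑ z ∑ a (μ i a * P z) * ∑ y μ i y F(e.symm (y,z))
  have lhs : ∀ z : ∀ j : {j // j ≠ i}, Ω j,
      ∑ a : Ω i, (μ i a * ∏ j : {j // j ≠ i}, μ j (z j)) * (∑ y, μ i y * F (e.symm (y, z)))
      = ∑ y : Ω i, (μ i y * ∏ j : {j // j ≠ i}, μ j (z j)) * F (e.symm (y, z)) := by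
    intro z
    rw [← Finset.sum_mul, ← Finset.sum_mul, hμi, one_mul]
    rw [Finset.mul_sum]
    apply Finset.sum_congr rfl; intro y _; ring
  rw [Finset.sum_congr rfl (fun z _ => lhs z)]
  exact Finset.sum_comm

noncomputable def iterAvg {n : ℕ} {Ω : Fin n → Type*} [∀ i, Fintype (Ω i)]
    [∀ i, DecidableEq (Ω i)] (μ : ∀ i, Ω i → ℝ) (h : (∀ i, Ω i) → ℝ) :
    ℕ → (∀ i, Ω i) → ℝ
  | 0 => h
  | k + 1 =>
    if hk : k < n then
      fun x => ∑ y, μ ⟨k, hk⟩ y * iterAvg μ h k (Function.update x ⟨k, hk⟩ y)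
    else iterAvg μ h k

section
variable {n : ℕ} {Ω : Fin n → Type*} [∀ i, Fintype (Ω i)] [∀ i, DecidableEq (Ω i)]
  (μ : ∀ i, Ω i → ℝ) (h : (∀ i, Ω i) → ℝ)

lemma iterAvg_succ_of_lt {k : ℕ} (hk : k < n) (x : ∀ i, Ω i) :
    iterAvg μ h (k + 1) x = ∑ y, μ ⟨k, hk⟩ y * iterAvg μ h k (Function.update x ⟨k, hk⟩ y) := by
  rw [iterAvg, dif_pos hk]

lemma iterAvg_nonneg (hμ0 : ∀ i x, 0 ≤ μ i x) (hh : ∀ x, 0 ≤ h x) :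
    ∀ k x, 0 ≤ iterAvg μ h k x := by
  intro k
  induction k with
  | zero => exact hh
  | succ k ih =>
    intro x
    by_cases hk : k < n
    · rw [iterAvg_succ_of_lt μ h hk]
      exact Finset.sum_nonneg fun y _ => mul_nonneg (hμ0 _ y) (ih _)
    · rw [iterAvg, dif_neg hk]; exact ih x

lemma iterAvg_depends (k : ℕ) (x x' : ∀ i, Ω i)
    (hxx : ∀ j : Fin n, k ≤ (j : ℕ) → x j = x' j) :
    iterAvg μ h k x = iterAvg μ h k x' := by
  induction k generalizing x x' with
  | zero =>
    have : x = x' := funext fun j => hxx j (Nat.zero_le _)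
    rw [this]
  | succ k ih =>
    by_cases hk : k < n
    · rw [iterAvg_succ_of_lt μ h hk, iterAvg_succ_of_lt μ h hk]
      apply Finset.sum_congr rfl
      intro y _
      congr 1
      apply ih
      intro j hj
      by_cases hji : j = (⟨k, hk⟩ : Fin n)
      · subst hji; simp
      · rw [Function.update_of_ne hji, Function.update_of_ne hji]
        apply hxx
        have : (j : ℕ) ≠ k := fun hc => hji (Fin.ext hc)
        omega
    · rw [iterAvg, dif_neg hk]
      apply ih
      intro j hj
      exact absurd (lt_of_le_of_lt hj j.isLt) hk

end

/-- Subadditivity of entropy for product measures: for a product probability measure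
`μ = μ_1 ⊗ ⋯ ⊗ μ_n` on a finite product space and a nonnegative function `h`,
`Ent_μ(h) ≤ Σ_i E_μ[Ent_{μ_i}(h | coordinates ≠ i)]`. -/
theorem entropy_subadditive_product (n : ℕ) (Ω : Fin n → Type*)
    [∀ i, Fintype (Ω i)] [∀ i, DecidableEq (Ω i)]
    (μ : ∀ i, Ω i → ℝ) (hμ0 : ∀ i x, 0 ≤ μ i x) (hμ1 : ∀ i, ∑ x, μ i x = 1)
    (h : (∀ i, Ω i) → ℝ) (hh : ∀ x, 0 ≤ h x) :
    finEnt (fun x => ∏ i, μ i (x i)) h ≤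
      ∑ i, ∑ x : ∀ i, Ω i, (∏ j, μ j (x j)) *
        finEnt (μ i) (fun y => h (Function.update x i y)) := by
  classical
  set w : (∀ i, Ω i) → ℝ := fun x => ∏ j, μ j (x j) with hwdef
  have hw0 : ∀ x, 0 ≤ w x := fun x => Finset.prod_nonneg fun j _ => hμ0 j (x j)
  have hw1 : ∑ x : ∀ i, Ω i, w x = 1 := by
    rw [hwdef]
    calc ∑ x : ∀ i, Ω i, ∏ j, μ j (x j)
        = ∏ j, ∑ y, μ j y := (Fintype.prod_sum (fun j y => μ j y)).symm
      _ = 1 := by simp [hμ1]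
  set c := ∑ x : ∀ i, Ω i, w x * h x with hcdef
  set T : ℕ → ℝ := fun k => ∑ x : ∀ i, Ω i, w x *
    (iterAvg μ h k x * Real.log (iterAvg μ h k x)) with hTdef
  -- expectation preserved
  have hE : ∀ k, ∑ x : ∀ i, Ω i, w x * iterAvg μ h k x = c := by
    intro k
    induction k with
    | zero => rfl
    | succ k ih =>
      by_cases hk : k < n
      · have : ∀ x : ∀ i, Ω i, iterAvg μ h (k+1) x
            = ∑ y, μ ⟨k, hk⟩ y * iterAvg μ h k (Function.update x ⟨k, hk⟩ y) :=
          iterAvg_succ_of_lt μ h hk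
        calc ∑ x : ∀ i, Ω i, w x * iterAvg μ h (k+1) x
            = ∑ x : ∀ i, Ω i, w x * ∑ y, μ ⟨k, hk⟩ y *
              iterAvg μ h k (Function.update x ⟨k, hk⟩ y) := by
              exact Finset.sum_congr rfl fun x _ => by rw [this x]
          _ = ∑ x : ∀ i, Ω i, w x * iterAvg μ h k x :=
              prodRebind μ ⟨k, hk⟩ (hμ1 _) (iterAvg μ h k)
          _ = c := ih
      · rw [show iterAvg μ h (k+1) = iterAvg μ h k by rw [iterAvg, dif_neg hk]]
        exact ih
  -- final level constant
  have hconst : ∀ x, iterAvg μ h n x = c := by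
    intro x
    have hc1 : ∀ x' : ∀ i, Ω i, iterAvg μ h n x' = iterAvg μ h n x := by
      intro x'
      exact iterAvg_depends μ h n x' x (fun j hj => absurd (lt_of_le_of_lt hj j.isLt) (lt_irrefl _))
    calc iterAvg μ h n x = (∑ x' : ∀ i, Ω i, w x') * iterAvg μ h n x := by rw [hw1, one_mul]
      _ = ∑ x' : ∀ i, Ω i, w x' * iterAvg μ h n x' := by
          rw [Finset.sum_mul]
          exact Finset.sum_congr rfl fun x' _ => by rw [hc1 x']
      _ = c := hE n
  have hTn : T n = c * Real.log c := by
    rw [hTdef]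
    simp only [hconst]
    rw [← Finset.sum_mul, hw1, one_mul]
  have hT0 : T 0 = ∑ x : ∀ i, Ω i, w x * h x * Real.log (h x) := by
    rw [hTdef]
    refine Finset.sum_congr rfl fun x _ => ?_
    rw [show iterAvg μ h 0 = h from rfl, mul_assoc]
  -- telescoping
  have htel : finEnt w h = ∑ k ∈ Finset.range n, (T k - T (k + 1)) := by
    rw [Finset.sum_range_sub' T, hTn, hT0]
    unfold finEnt
    rw [← hcdef]
  -- per-step identity
  have hterm : ∀ k (hk : k < n), T k - T (k + 1) = ∑ x : ∀ i, Ω i, w x *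
      finEnt (μ ⟨k, hk⟩) (fun y => iterAvg μ h k (Function.update x ⟨k, hk⟩ y)) := by
    intro k hk
    have e1 : ∑ x : ∀ i, Ω i, w x * finEnt (μ ⟨k, hk⟩)
        (fun y => iterAvg μ h k (Function.update x ⟨k, hk⟩ y))
        = (∑ x : ∀ i, Ω i, w x * ∑ y, μ ⟨k, hk⟩ y *
            (iterAvg μ h k (Function.update x ⟨k, hk⟩ y) *
              Real.log (iterAvg μ h k (Function.update x ⟨k, hk⟩ y))))
          - ∑ x : ∀ i, Ω i, w x *
            (iterAvg μ h (k+1) x * Real.log (iterAvg μ h (k+1) x)) := by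
      rw [← Finset.sum_sub_distrib]
      apply Finset.sum_congr rfl
      intro x _
      rw [← mul_sub]
      congr 1
      unfold finEnt
      rw [iterAvg_succ_of_lt μ h hk]
      congr 1
      exact Finset.sum_congr rfl fun y _ => by ring
    rw [e1, prodRebind μ ⟨k, hk⟩ (hμ1 _)
      (fun x => iterAvg μ h k x * Real.log (iterAvg μ h k x))]
  -- monotonicity under conditioning
  have hmono : ∀ (i : Fin n) (k : ℕ), k ≤ (i : ℕ) →
      (∑ x : ∀ i, Ω i, w x * finEnt (μ i) (fun y => iterAvg μ h k (Function.update x i y)))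
        ≤ ∑ x : ∀ i, Ω i, w x * finEnt (μ i) (fun y => h (Function.update x i y)) := by
    intro i k
    induction k with
    | zero => intro _; exact le_of_eq rfl
    | succ k ih =>
      intro hki
      have hk : k < n := lt_of_lt_of_le (Nat.lt_of_lt_of_le (Nat.lt_succ_of_le (le_refl k)) hki) (le_of_lt i.isLt)
      set j : Fin n := ⟨k, hk⟩ with hjdef
      have hji : j ≠ i := by
        intro hc
        rw [hc] at hjdef
        have : (i : ℕ) = k := by rw [hjdef]
        omega
      have hfun : ∀ x : ∀ i, Ω i, (fun y => iterAvg μ h (k+1) (Function.update x i y))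
          = fun y => ∑ z, μ j z *
              iterAvg μ h k (Function.update (Function.update x j z) i y) := by
        intro x
        funext y
        rw [iterAvg_succ_of_lt μ h hk]
        apply Finset.sum_congr rfl
        intro z _
        congr 2
        exact Function.update_comm hji.symm y z x
      calc ∑ x : ∀ i, Ω i, w x * finEnt (μ i) (fun y => iterAvg μ h (k+1) (Function.update x i y))
          ≤ ∑ x : ∀ i, Ω i, w x * ∑ z, μ j z *
              finEnt (μ i) (fun y => iterAvg μ h k (Function.update (Function.update x j z) i y)) := by
            apply Finset.sum_le_sum
            intro x _
            apply mul_le_mul_of_nonneg_left _ (hw0 x)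
            rw [hfun x]
            exact finEnt_mix (μ i) (hμ0 i) (μ j) (hμ0 j) _
              (fun z y => iterAvg_nonneg μ h hμ0 hh k _)
        _ = ∑ x : ∀ i, Ω i, w x *
              finEnt (μ i) (fun y => iterAvg μ h k (Function.update x i y)) :=
            prodRebind μ j (hμ1 _)
              (fun x => finEnt (μ i) (fun y => iterAvg μ h k (Function.update x i y)))
        _ ≤ _ := ih (le_trans (Nat.le_succ k) hki)
  -- put everything together
  calc finEnt w h = ∑ k ∈ Finset.range n, (T k - T (k + 1)) := htel
    _ = ∑ i : Fin n, (T (i : ℕ) - T ((i : ℕ) + 1)) :=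
        (Fin.sum_univ_eq_sum_range (fun k => T k - T (k + 1)) n).symm
    _ ≤ ∑ i : Fin n, ∑ x : ∀ i, Ω i, w x *
          finEnt (μ i) (fun y => h (Function.update x i y)) := by
        apply Finset.sum_le_sum
        intro i _
        rw [hterm (i : ℕ) i.isLt]
        have : (⟨(i : ℕ), i.isLt⟩ : Fin n) = i := Fin.eta i i.isLt
        rw [this]
        exact hmono i (i : ℕ) (le_refl _)
end
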